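/- Lifting attracting cycles to higher degree: let p be a monic polynomial of degree d and α ∈ ℂ, and set p̃(Z) = (Z − α)·p(Z). For a point z = (z₁,…,z_d, α) ∈ ℂ^{d+1} with pairwise distinct entries, the Jacobian matrix of W_{p̃} at z is block upper-triangular: its upper-left d×d block is the Jacobian of W_p at (z₁,…,z_d), its lower-left 1×d block is zero, and its lower-right entry is λ = 1 − p(α)/∏_{j=1}^d (α − z_j). -/

import Mathlib

open Polynomial Finset

lemma erase_last_eq {d : ℕ} :
    (univ : Finset (Fin (d+1))).erase (Fin.last d) = univ.image Fin.castSucc := by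
  ext k
  rcases Fin.eq_castSucc_or_eq_last k with ⟨j, rfl⟩ | rfl <;>
    simp [(Fin.castSucc_lt_last _).ne]

lemma prod_erase_last {d : ℕ} (f : Fin (d+1) → ℂ) :
    ∏ k ∈ univ.erase (Fin.last d), f k = ∏ k : Fin d, f k.castSucc := by
  rw [erase_last_eq, Finset.prod_image (fun a _ b _ h => Fin.castSucc_injective d h)]

lemma erase_castSucc_eq {d : ℕ} (i : Fin d) :
    (univ : Finset (Fin (d+1))).erase i.castSucc
      = insert (Fin.last d) ((univ.erase i).image Fin.castSucc) := by
  ext k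
  rcases Fin.eq_castSucc_or_eq_last k with ⟨j, rfl⟩ | rfl <;>
    simp [(Fin.castSucc_lt_last _).ne, (Fin.castSucc_lt_last _).ne',
      Fin.castSucc_injective d |>.eq_iff, and_comm]

lemma prod_erase_castSucc {d : ℕ} (i : Fin d) (f : Fin (d+1) → ℂ) :
    ∏ k ∈ univ.erase i.castSucc, f k
      = f (Fin.last d) * ∏ k ∈ univ.erase i, f k.castSucc := by
  rw [erase_castSucc_eq,
    Finset.prod_insert (by
      rintro hmem
      obtain ⟨a, -, h⟩ := Finset.mem_image.mp hmem
      exact (Fin.castSucc_lt_last a).ne h),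
    Finset.prod_image (fun a _ b _ h => Fin.castSucc_injective d h)]

theorem weierstrass_lift_jacobian
    (d : ℕ) (p ptilde : Polynomial ℂ) (hmonic : p.Monic) (hdeg : p.natDegree = d)
    (α : ℂ) (hptilde : ptilde = (X - C α) * p)
    (W : (Fin d → ℂ) → Fin d → ℂ)
    (hW : ∀ (w : Fin d → ℂ) (k : Fin d),
      W w k = w k - p.eval (w k) / ∏ j ∈ univ.erase k, (w k - w j))
    (Wt : (Fin (d + 1) → ℂ) → Fin (d + 1) → ℂ)
    (hWt : ∀ (w : Fin (d + 1) → ℂ) (k : Fin (d + 1)),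
      Wt w k = w k - ptilde.eval (w k) / ∏ j ∈ univ.erase k, (w k - w j))
    (z : Fin (d + 1) → ℂ) (hz : Function.Injective z)
    (hlast : z (Fin.last d) = α) :
    (∀ j : Fin d,
      deriv (fun w => Wt (Function.update z j.castSucc w) (Fin.last d))
        (z j.castSucc) = 0) ∧
    (deriv (fun w => Wt (Function.update z (Fin.last d) w) (Fin.last d))
        (z (Fin.last d))
      = 1 - p.eval α / ∏ j : Fin d, (α - z j.castSucc)) ∧
    (∀ i j : Fin d,
      deriv (fun w => Wt (Function.update z j.castSucc w) i.castSucc)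
          (z j.castSucc)
        = deriv (fun w => W (Function.update (fun i' : Fin d => z i'.castSucc) j w) i)
            (z j.castSucc)) := by
  have hne : ∀ i : Fin d, z i.castSucc ≠ α := fun i h =>
    (Fin.castSucc_lt_last i).ne (hz (h.trans hlast.symm))
  have hupd : ∀ (j : Fin d) (w : ℂ) (k : Fin d),
      Function.update z j.castSucc w k.castSucc
        = Function.update (fun i' : Fin d => z i'.castSucc) j w k := by
    intro j w k
    by_cases hkj : k = j
    · subst hkj; simp
    · rw [Function.update_of_ne (fun h => hkj (Fin.castSucc_injective d h)),
        Function.update_of_ne hkj]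
  have hupd_last : ∀ (j : Fin d) (w : ℂ),
      Function.update z j.castSucc w (Fin.last d) = α := by
    intro j w
    rw [Function.update_of_ne (Fin.castSucc_lt_last j).ne', hlast]
  refine ⟨?_, ?_, ?_⟩
  · -- lower-left block vanishes
    intro j
    have hconst : (fun w => Wt (Function.update z j.castSucc w) (Fin.last d))
        = fun _ => α := by
      funext w
      rw [hWt, hupd_last, hptilde]
      simp
    rw [hconst, deriv_const]
  · -- lower-right entry
    have hQα : (∏ k : Fin d, (α - z k.castSucc)) ≠ 0 := by
      refine Finset.prod_ne_zero_iff.mpr fun k _ => sub_ne_zero.mpr ?_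
      exact fun h => hne k h.symm
    have hfn : (fun w => Wt (Function.update z (Fin.last d) w) (Fin.last d))
        = fun w => w - (w - α) * p.eval w / ∏ k : Fin d, (w - z k.castSucc) := by
      funext w
      rw [hWt, Function.update_self, prod_erase_last, hptilde]
      have hterm : ∀ k : Fin d,
          Function.update z (Fin.last d) w k.castSucc = z k.castSucc :=
        fun k => Function.update_of_ne (Fin.castSucc_lt_last k).ne _ _
      simp [hterm]
    set q : Polynomial ℂ := ∏ k : Fin d, (X - C (z k.castSucc)) with hq
    have hQeval : ∀ w : ℂ, (∏ k : Fin d, (w - z k.castSucc)) = q.eval w := by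
      intro w; simp [hq, eval_prod]
    have hQd : HasDerivAt (fun w : ℂ => ∏ k : Fin d, (w - z k.castSucc))
        (q.derivative.eval α) α := by
      have h := q.hasDerivAt α
      have he : (fun w : ℂ => ∏ k : Fin d, (w - z k.castSucc))
          = fun x => q.eval x := funext hQeval
      rw [he]; exact h
    have hnum : HasDerivAt (fun w : ℂ => (w - α) * p.eval w)
        (1 * p.eval α + (α - α) * p.derivative.eval α) α :=
      ((hasDerivAt_id α).sub_const α).mul (p.hasDerivAt α)
    have hQα' : (∏ k : Fin d, (α - z k.castSucc)) ≠ 0 := hQα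
    have hdiv := hnum.div hQd hQα'
    have hval : ((1 * p.eval α + (α - α) * p.derivative.eval α)
          * (∏ k : Fin d, (α - z k.castSucc))
          - (α - α) * p.eval α * q.derivative.eval α)
          / (∏ k : Fin d, (α - z k.castSucc)) ^ 2
        = p.eval α / ∏ k : Fin d, (α - z k.castSucc) := by
      field_simp
      ring
    rw [hval] at hdiv
    have hfull : HasDerivAt
        (fun w : ℂ => w - (w - α) * p.eval w / ∏ k : Fin d, (w - z k.castSucc))
        (1 - p.eval α / ∏ k : Fin d, (α - z k.castSucc)) α :=
      (hasDerivAt_id α).sub hdiv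
    rw [hfn, hlast, hfull.deriv]
  · -- upper-left block
    intro i j
    by_cases hij : i = j
    · subst hij
      apply Filter.EventuallyEq.deriv_eq
      filter_upwards [eventually_ne_nhds (hne i)] with w hw
      rw [hWt, hW, Function.update_self, Function.update_self,
        prod_erase_castSucc, hupd_last, hptilde]
      simp only [eval_mul, eval_sub, eval_X, eval_C]
      have h1 : ∏ k ∈ univ.erase i, (w - Function.update z i.castSucc w k.castSucc)
          = ∏ k ∈ univ.erase i, (w - z k.castSucc) :=
        Finset.prod_congr rfl fun k hk => by
          rw [Function.update_of_ne
            (fun h => (Finset.mem_erase.mp hk).1 (Fin.castSucc_injective d h))]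
      have h2 : ∏ k ∈ univ.erase i,
            (w - Function.update (fun i' : Fin d => z i'.castSucc) i w k)
          = ∏ k ∈ univ.erase i, (w - z k.castSucc) :=
        Finset.prod_congr rfl fun k hk => by
          rw [Function.update_of_ne (Finset.mem_erase.mp hk).1]
      rw [h1, h2, mul_div_mul_left _ _ (sub_ne_zero.mpr hw)]
    · have key : (fun w => Wt (Function.update z j.castSucc w) i.castSucc)
          = (fun w => W (Function.update (fun i' : Fin d => z i'.castSucc) j w) i) := by
        funext w
        rw [hWt, hW,
          Function.update_of_ne (fun h => hij (Fin.castSucc_injective d h)),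
          Function.update_of_ne hij,
          prod_erase_castSucc, hupd_last, hptilde]
        simp only [eval_mul, eval_sub, eval_X, eval_C]
        have h1 : ∏ k ∈ univ.erase i,
              (z i.castSucc - Function.update z j.castSucc w k.castSucc)
            = ∏ k ∈ univ.erase i,
              (z i.castSucc - Function.update (fun i' : Fin d => z i'.castSucc) j w k) :=
          Finset.prod_congr rfl fun k _ => by rw [hupd j w k]
        rw [h1, mul_div_mul_left _ _ (sub_ne_zero.mpr (hne i))]
      rw [key]
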